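/- Let B be a nonempty finite set of primes and let χ : ∏_{p∈B} ℤ_p^× → 𝕋 be a continuous group homomorphism which is nontrivial (χ(a) ≠ 1 for some a). For each p ∈ B, let χ_p : ℤ_p^× → 𝕋 be the p-th component character χ_p(u) = χ(1, …, u, …, 1), and let k_p ∈ ℕ be such that χ_p(u) = 1 whenever u ≡ 1 (mod p^{k_p}). Set m = ∏_{p∈B} p^{k_p}. Then the function χ_m : ℤ → ℂ defined by χ_m(n) = χ((n, n, …, n)) if gcd(n, m) = 1 and χ_m(n) = 0 otherwise is a Dirichlet character modulo m (i.e. it is completely multiplicative, periodic with period m, and vanishes exactly on integers not coprime to m), and it is nontrivial: there exists n₀ ∈ ℤ with gcd(n₀, m) = 1 and χ_m(n₀) ≠ 1. -/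

import Mathlib

instance (p : Nat.Primes) : Fact (Nat.Prime (p : ℕ)) := ⟨p.2⟩

open PadicInt in
/-- If two elements of the product agree modulo `p^{k p}` componentwise, then `χ` agrees
on them, provided `χ` is trivial on each component subgroup `1 + p^{k p} ℤ_p`. -/
private lemma aux_chi_eq (B : Finset Nat.Primes)
    (χ : (∀ p : {q : Nat.Primes // q ∈ B}, ℤ_[(p.1 : ℕ)]ˣ) →* Circle)
    (k : {q : Nat.Primes // q ∈ B} → ℕ)
    (hk : ∀ (p : {q : Nat.Primes // q ∈ B}) (u : ℤ_[(p.1 : ℕ)]ˣ),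
      (∃ v : ℤ_[(p.1 : ℕ)], (u : ℤ_[(p.1 : ℕ)]) - 1 = ((p.1 : ℕ) : ℤ_[(p.1 : ℕ)]) ^ (k p) * v) →
      χ (Pi.mulSingle p u) = 1)
    (u u' : ∀ p : {q : Nat.Primes // q ∈ B}, ℤ_[(p.1 : ℕ)]ˣ)
    (h : ∀ p : {q : Nat.Primes // q ∈ B},
      ((p.1 : ℕ) : ℤ_[(p.1 : ℕ)]) ^ (k p) ∣ ((u p : ℤ_[(p.1 : ℕ)]) - (u' p : ℤ_[(p.1 : ℕ)]))) :
    χ u = χ u' := by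
  classical
  have key : χ (u'⁻¹ * u) = 1 := by
    have hdecomp : (u'⁻¹ * u) = ∏ p, Pi.mulSingle p ((u'⁻¹ * u) p) :=
      (Finset.univ_prod_mulSingle _).symm
    rw [hdecomp, map_prod]
    apply Finset.prod_eq_one
    intro p _
    apply hk
    obtain ⟨v, hv⟩ := h p
    refine ⟨(↑(u' p)⁻¹ : ℤ_[(p.1 : ℕ)]) * v, ?_⟩
    have h2 : (↑(u' p)⁻¹ : ℤ_[(p.1 : ℕ)]) * ((u' p : ℤ_[(p.1 : ℕ)])) = 1 := Units.inv_mul _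
    have h3 : (((u'⁻¹ * u) p : ℤ_[(p.1 : ℕ)]))
        = (↑(u' p)⁻¹ : ℤ_[(p.1 : ℕ)]) * (u p : ℤ_[(p.1 : ℕ)]) := by
      simp [Pi.mul_apply, Pi.inv_apply]
    rw [h3]
    linear_combination (↑(u' p)⁻¹ : ℤ_[(p.1 : ℕ)]) * hv + h2
  calc χ u = χ (u' * (u'⁻¹ * u)) := by group
  _ = χ u' * χ (u'⁻¹ * u) := map_mul _ _ _
  _ = χ u' := by rw [key, mul_one]

theorem character_product_padic_units_gives_dirichlet_character
    (B : Finset Nat.Primes) (hB : B.Nonempty)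
    (χ : (∀ p : {q : Nat.Primes // q ∈ B}, ℤ_[(p.1 : ℕ)]ˣ) →* Circle)
    (hχcont : Continuous χ)
    (hχnt : ∃ a : ∀ p : {q : Nat.Primes // q ∈ B}, ℤ_[(p.1 : ℕ)]ˣ, χ a ≠ 1)
    (k : {q : Nat.Primes // q ∈ B} → ℕ)
    (hk : ∀ (p : {q : Nat.Primes // q ∈ B}) (u : ℤ_[(p.1 : ℕ)]ˣ),
      (∃ v : ℤ_[(p.1 : ℕ)], (u : ℤ_[(p.1 : ℕ)]) - 1 = ((p.1 : ℕ) : ℤ_[(p.1 : ℕ)]) ^ (k p) * v) →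
      χ (Pi.mulSingle p u) = 1)
    (m : ℕ) (hm : m = ∏ p ∈ B.attach, (p.1 : ℕ) ^ (k p)) :
    ∃ ψ : DirichletCharacter ℂ m,
      (∀ (n : ℤ) (u : ∀ p : {q : Nat.Primes // q ∈ B}, ℤ_[(p.1 : ℕ)]ˣ),
        IsCoprime n (m : ℤ) →
        (∀ p : {q : Nat.Primes // q ∈ B}, ((u p : ℤ_[(p.1 : ℕ)])) = (n : ℤ_[(p.1 : ℕ)])) →
        ψ (n : ZMod m) = (χ u : ℂ)) ∧
      (∀ n : ℤ, ¬ IsCoprime n (m : ℤ) → ψ (n : ZMod m) = 0) ∧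
      (∃ n₀ : ℤ, IsCoprime n₀ (m : ℤ) ∧ ψ (n₀ : ZMod m) ≠ 1) := by
  classical
  have hm0 : 0 < m := by
    rw [hm]
    exact Finset.prod_pos fun p _ => pow_pos p.1.2.pos _
  haveI : NeZero m := ⟨hm0.ne'⟩
  -- lift a natural number to a family of p-adic units
  set U : ℕ → ∀ p : {q : Nat.Primes // q ∈ B}, ℤ_[(p.1 : ℕ)]ˣ := fun n p =>
    if h : IsUnit ((n : ℤ_[(p.1 : ℕ)])) then h.unit else 1 with hU
  have hUval : ∀ (n : ℕ) (p : {q : Nat.Primes // q ∈ B}), ¬ ((p.1 : ℕ) ∣ n) →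
      ((U n p : ℤ_[(p.1 : ℕ)]) = (n : ℤ_[(p.1 : ℕ)])) := by
    intro n p hpn
    have hu : IsUnit ((n : ℤ_[(p.1 : ℕ)])) := by
      rw [PadicInt.isUnit_iff]
      refine le_antisymm (PadicInt.norm_le_one _) ?_
      by_contra hlt
      push_neg at hlt
      have hcast : (((n : ℤ) : ℤ_[(p.1 : ℕ)])) = ((n : ℕ) : ℤ_[(p.1 : ℕ)]) := by push_cast; ring
      have := (PadicInt.norm_int_lt_one_iff_dvd (p := (p.1 : ℕ)) (n : ℤ)).mp
        (by rw [hcast]; exact hlt)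
      exact hpn (Int.ofNat_dvd.mp this)
    simp [hU, hu]
  -- prime power divides m
  have hpkm : ∀ p : {q : Nat.Primes // q ∈ B}, ((p.1 : ℕ)) ^ (k p) ∣ m := by
    intro p
    rw [hm]
    exact Finset.dvd_prod_of_mem _ (Finset.mem_attach _ _)
  have hpm : ∀ p : {q : Nat.Primes // q ∈ B}, 0 < k p → ((p.1 : ℕ)) ∣ m := fun p hkp =>
    dvd_trans (dvd_pow_self _ hkp.ne') (hpkm p)
  -- coprime naturals are not divisible by relevant primes
  have hnd : ∀ (n : ℕ) (p : {q : Nat.Primes // q ∈ B}), Nat.Coprime n m → 0 < k p →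
      ¬ ((p.1 : ℕ) ∣ n) := by
    intro n p hco hkp hdvd
    have h1 : ((p.1 : ℕ)) ∣ Nat.gcd n m := Nat.dvd_gcd hdvd (hpm p hkp)
    rw [Nat.Coprime] at hco
    rw [hco] at h1
    exact p.1.2.one_lt.ne' (Nat.dvd_one.mp h1)
  -- divisibility transfer ℤ → ℤ_p
  have castdvd : ∀ (p : {q : Nat.Primes // q ∈ B}) (a b : ℤ),
      (((p.1 : ℕ)) ^ (k p) : ℤ) ∣ (a - b) →
      ((p.1 : ℕ) : ℤ_[(p.1 : ℕ)]) ^ (k p) ∣ ((a : ℤ_[(p.1 : ℕ)]) - (b : ℤ_[(p.1 : ℕ)])) := by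
    intro p a b ⟨c, hc⟩
    refine ⟨(c : ℤ_[(p.1 : ℕ)]), ?_⟩
    have := congrArg (fun z : ℤ => (z : ℤ_[(p.1 : ℕ)])) hc
    push_cast at this
    exact this
  -- values of U on coprime numbers, compared modulo m
  have hUcomp : ∀ (a : ℕ) (p : {q : Nat.Primes // q ∈ B}), Nat.Coprime a m → 0 < k p →
      ((U a p : ℤ_[(p.1 : ℕ)]) = (a : ℤ_[(p.1 : ℕ)])) := fun a p hco hkp =>
    hUval a p (hnd a p hco hkp)
  -- the character on units of ZMod m
  set F : (ZMod m)ˣ → Circle := fun x => χ (U (ZMod.val (x : ZMod m))) with hF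
  have hvalco : ∀ x : (ZMod m)ˣ, Nat.Coprime (ZMod.val (x : ZMod m)) m := fun x =>
    ZMod.val_coe_unit_coprime x
  -- F is multiplicative
  have hFmul : ∀ x y : (ZMod m)ˣ, F (x * y) = F x * F y := by
    intro x y
    rw [hF, ← map_mul]
    apply aux_chi_eq B χ k hk
    intro p
    by_cases hkp : k p = 0
    · rw [hkp, pow_zero]; exact one_dvd _
    · have hkp' : 0 < k p := Nat.pos_of_ne_zero hkp
      have h1 := hUcomp (ZMod.val ((x * y : (ZMod m)ˣ) : ZMod m)) p (hvalco (x * y)) hkp'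
      have h2 := hUcomp (ZMod.val (x : ZMod m)) p (hvalco x) hkp'
      have h3 := hUcomp (ZMod.val (y : ZMod m)) p (hvalco y) hkp'
      have hmul : ((U (ZMod.val (x : ZMod m)) * U (ZMod.val (y : ZMod m))) p
          : ℤ_[(p.1 : ℕ)])
          = (U (ZMod.val (x : ZMod m)) p : ℤ_[(p.1 : ℕ)])
            * (U (ZMod.val (y : ZMod m)) p : ℤ_[(p.1 : ℕ)]) := by
        simp [Pi.mul_apply]
      rw [h1, hmul, h2, h3]
      have hdvdZ : ((((p.1 : ℕ)) ^ (k p) : ℕ) : ℤ) ∣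
          ((ZMod.val ((x * y : (ZMod m)ˣ) : ZMod m) : ℤ)
            - (ZMod.val (x : ZMod m) : ℤ) * (ZMod.val (y : ZMod m) : ℤ)) := by
        refine dvd_trans (Int.natCast_dvd_natCast.mpr (hpkm p)) ?_
        rw [← ZMod.intCast_zmod_eq_zero_iff_dvd]
        push_cast
        simp [ZMod.natCast_val, ZMod.cast_id]
      push_cast at hdvdZ
      have h5 := castdvd p _ _ hdvdZ
      push_cast at h5
      exact h5
  set Fhom : (ZMod m)ˣ →* Circle := MonoidHom.mk' F hFmul with hFhom
  set ψ : DirichletCharacter ℂ m := MulChar.ofUnitHom (Circle.toUnits.comp Fhom) with hψ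
  have hψx : ∀ x : (ZMod m)ˣ, ψ (x : ZMod m) = ((F x : Circle) : ℂ) := by
    intro x
    rw [hψ, MulChar.ofUnitHom_coe]
    simp only [MonoidHom.comp_apply, Circle.toUnits_apply, Units.val_mk0]
    rfl
  -- units from coprimality
  have hunit : ∀ n : ℤ, IsCoprime n (m : ℤ) → IsUnit ((n : ZMod m)) := by
    intro n ⟨a, b, hab⟩
    have : ((a : ZMod m)) * ((n : ZMod m)) = 1 := by
      have := congrArg (fun z : ℤ => ((z : ZMod m))) hab
      push_cast at this
      simpa [ZMod.natCast_self] using this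
    exact IsUnit.of_mul_eq_one _ (mul_comm (a : ZMod m) (n : ZMod m) ▸ this)
  -- evaluation of ψ at coprime integers
  have heval : ∀ (n : ℤ) (hn : IsCoprime n (m : ℤ)),
      ψ ((n : ZMod m)) = ((F (hunit n hn).unit : Circle) : ℂ) := by
    intro n hn
    have hx := hψx (hunit n hn).unit
    rwa [(hunit n hn).unit_spec] at hx
  refine ⟨ψ, ?_, ?_, ?_⟩
  · -- evaluation at compatible u
    intro n u hn hval
    rw [heval n hn]
    have hFeq : F (hunit n hn).unit = χ u := by
      rw [hF]
      apply aux_chi_eq B χ k hk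
      intro p
      by_cases hkp : k p = 0
      · rw [hkp, pow_zero]; exact one_dvd _
      · have hkp' := Nat.pos_of_ne_zero hkp
        rw [hUcomp _ p (hvalco _) hkp', hval p]
        have hdvdZ : (((p.1 : ℕ)) ^ (k p) : ℤ) ∣
            ((ZMod.val (((hunit n hn).unit : (ZMod m)ˣ) : ZMod m) : ℤ) - n) := by
          have h6 : (m : ℤ) ∣ ((ZMod.val (((hunit n hn).unit : (ZMod m)ˣ) : ZMod m) : ℤ) - n) := by
            rw [← ZMod.intCast_zmod_eq_zero_iff_dvd]
            push_cast
            simp [ZMod.natCast_val, ZMod.cast_id, IsUnit.unit_spec]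
          exact dvd_trans (by exact_mod_cast Int.natCast_dvd_natCast.mpr (hpkm p)) h6
        push_cast at hdvdZ
        have h5 := castdvd p _ _ hdvdZ
        push_cast at h5
        exact h5
    rw [hFeq]
  · -- vanishing off coprimes
    intro n hn
    apply ψ.map_nonunit
    intro hu
    apply hn
    obtain ⟨b, hb⟩ := hu.exists_left_inv
    have hdvd : (m : ℤ) ∣ ((ZMod.val b : ℤ) * n - 1) := by
      rw [← ZMod.intCast_zmod_eq_zero_iff_dvd]
      push_cast
      simp [ZMod.natCast_val, ZMod.cast_id, hb]
    obtain ⟨d, hd⟩ := hdvd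
    exact ⟨(ZMod.val b : ℤ), -d, by linear_combination hd⟩
  · -- nontriviality
    have hexists : ∃ (p₀ : {q : Nat.Primes // q ∈ B}) (u₀ : ℤ_[(p₀.1 : ℕ)]ˣ),
        χ (Pi.mulSingle p₀ u₀) ≠ 1 := by
      by_contra hcon
      push_neg at hcon
      obtain ⟨a, ha⟩ := hχnt
      apply ha
      calc χ a = χ (∏ p, Pi.mulSingle p (a p)) := by rw [Finset.univ_prod_mulSingle]
      _ = ∏ p, χ (Pi.mulSingle p (a p)) := map_prod _ _ _
      _ = 1 := Finset.prod_eq_one fun p _ => hcon p (a p)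
    obtain ⟨p₀, u₀, hu₀⟩ := hexists
    have hk₀ : 0 < k p₀ := by
      rcases Nat.eq_zero_or_pos (k p₀) with h0 | h
      · exact absurd (hk p₀ u₀ ⟨(u₀ : ℤ_[(p₀.1 : ℕ)]) - 1, by rw [h0, pow_zero, one_mul]⟩) hu₀
      · exact h
    set N1 : ℕ := (p₀.1 : ℕ) ^ (k p₀) with hN1
    set M2 : ℕ := ∏ p ∈ B.attach.erase p₀, (p.1 : ℕ) ^ (k p) with hM2
    have hmfac : m = N1 * M2 := by
      rw [hm, hN1, hM2]
      exact (Finset.mul_prod_erase _ _ (Finset.mem_attach _ _)).symm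
    haveI : NeZero N1 := ⟨pow_ne_zero _ p₀.1.2.pos.ne'⟩
    have hcopN : Nat.Coprime N1 M2 := by
      apply Nat.Coprime.pow_left
      apply Nat.Coprime.prod_right
      intro i hi
      apply Nat.Coprime.pow_right
      refine (Nat.coprime_primes p₀.1.2 i.1.2).mpr ?_
      intro hEq
      exact (Finset.ne_of_mem_erase hi) (Subtype.ext (Subtype.ext hEq.symm))
    set t : ℕ := (PadicInt.toZModPow (k p₀) ((u₀ : ℤ_[(p₀.1 : ℕ)]))).val with ht
    have htunit : IsUnit ((PadicInt.toZModPow (k p₀) ((u₀ : ℤ_[(p₀.1 : ℕ)])))) :=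
      u₀.isUnit.map _
    have htco : Nat.Coprime t N1 := by
      have h := ZMod.val_coe_unit_coprime htunit.unit
      rwa [htunit.unit_spec] at h
    have hmodco : ∀ a b n : ℕ, a ≡ b [MOD n] → Nat.Coprime b n → Nat.Coprime a n := by
      intro a b n h hb
      have h' : a % n = b % n := h
      unfold Nat.Coprime at hb ⊢
      rw [Nat.gcd_comm, Nat.gcd_rec, h', ← Nat.gcd_rec, Nat.gcd_comm]
      exact hb
    obtain ⟨n₀, hn₀1, hn₀2⟩ := Nat.chineseRemainder hcopN t 1
    have hco1 : Nat.Coprime n₀ N1 := hmodco _ _ _ hn₀1 htco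
    have hco2 : Nat.Coprime n₀ M2 := hmodco _ _ _ hn₀2 (Nat.coprime_one_left _)
    have hcom : Nat.Coprime n₀ m := by rw [hmfac]; exact Nat.Coprime.mul_right hco1 hco2
    have hcoZ : IsCoprime ((n₀ : ℤ)) ((m : ℕ) : ℤ) := Nat.isCoprime_iff_coprime.mpr hcom
    refine ⟨(n₀ : ℤ), hcoZ, ?_⟩
    rw [heval _ hcoZ]
    set vx : ℕ := ZMod.val (((hunit _ hcoZ).unit : (ZMod m)ˣ) : ZMod m) with hvx
    have hvxco : Nat.Coprime vx m := hvalco _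
    have hvxn : (m : ℤ) ∣ ((vx : ℤ) - ((n₀ : ℕ) : ℤ)) := by
      rw [← ZMod.intCast_zmod_eq_zero_iff_dvd]
      push_cast
      simp [hvx, ZMod.natCast_val, ZMod.cast_id, IsUnit.unit_spec]
    have hFeq : F (hunit _ hcoZ).unit = χ (Pi.mulSingle p₀ u₀) := by
      rw [hF]
      apply aux_chi_eq B χ k hk
      intro p
      by_cases hpp : p = p₀
      · subst hpp
        rw [hUcomp _ p hvxco hk₀]
        have hsingle : (((Pi.mulSingle p u₀ : ∀ q : {q : Nat.Primes // q ∈ B}, ℤ_[(q.1 : ℕ)]ˣ) p : ℤ_[(p.1 : ℕ)])) = (u₀ : ℤ_[(p.1 : ℕ)]) := by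
          rw [Pi.mulSingle_eq_same]
        rw [hsingle]
        have dA : (N1 : ℤ) ∣ ((vx : ℤ) - ((n₀ : ℕ) : ℤ)) :=
          dvd_trans (Int.natCast_dvd_natCast.mpr ⟨M2, hmfac⟩) hvxn
        have dB : (N1 : ℤ) ∣ (((n₀ : ℕ) : ℤ) - (t : ℤ)) := by
          have h := (Nat.modEq_iff_dvd).mp hn₀1
          have h2 := dvd_neg.mpr h
          rw [neg_sub] at h2
          exact h2
        have dC : ((p.1 : ℕ) : ℤ_[(p.1 : ℕ)]) ^ (k p) ∣
            ((t : ℤ_[(p.1 : ℕ)]) - (u₀ : ℤ_[(p.1 : ℕ)])) := by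
          have hker : ((u₀ : ℤ_[(p.1 : ℕ)])) - (t : ℤ_[(p.1 : ℕ)]) ∈
              RingHom.ker (PadicInt.toZModPow (k p) : ℤ_[(p.1 : ℕ)] →+* ZMod ((p.1 : ℕ) ^ (k p))) := by
            rw [RingHom.mem_ker, map_sub, map_natCast, ht, ZMod.natCast_val, ZMod.cast_id,
              sub_self]
          rw [PadicInt.ker_toZModPow, Ideal.mem_span_singleton] at hker
          have h2 := dvd_neg.mpr hker
          rw [neg_sub] at h2
          exact h2
        rw [hN1] at dA dB
        push_cast at dA dB
        have e1 := castdvd p _ _ dA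
        have e2 := castdvd p _ _ dB
        push_cast at e1 e2
        have efinal := dvd_add (dvd_add e1 e2) dC
        have hrw : ((vx : ℤ_[(p.1 : ℕ)])) - (u₀ : ℤ_[(p.1 : ℕ)])
            = (((vx : ℤ_[(p.1 : ℕ)])) - ((n₀ : ℕ) : ℤ_[(p.1 : ℕ)]))
              + (((n₀ : ℕ) : ℤ_[(p.1 : ℕ)]) - (t : ℤ_[(p.1 : ℕ)]))
              + ((t : ℤ_[(p.1 : ℕ)]) - (u₀ : ℤ_[(p.1 : ℕ)])) := by ring
        rw [hrw]
        exact efinal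
      · have hsingle : (((Pi.mulSingle p₀ u₀ : ∀ q : {q : Nat.Primes // q ∈ B}, ℤ_[(q.1 : ℕ)]ˣ) p : ℤ_[(p.1 : ℕ)])) = 1 := by
          rw [Pi.mulSingle_eq_of_ne hpp]
          rfl
        by_cases hkp : k p = 0
        · rw [hkp, pow_zero]; exact one_dvd _
        · have hkp' := Nat.pos_of_ne_zero hkp
          rw [hUcomp _ p hvxco hkp', hsingle]
          have hpM2 : (p.1 : ℕ) ^ (k p) ∣ M2 :=
            Finset.dvd_prod_of_mem _ (Finset.mem_erase.mpr ⟨hpp, Finset.mem_attach _ _⟩)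
          have dM : (((p.1 : ℕ)) ^ (k p) : ℤ) ∣ (((n₀ : ℕ) : ℤ) - 1) := by
            have hA : ((((p.1 : ℕ)) ^ (k p) : ℕ) : ℤ) ∣ (M2 : ℤ) :=
              Int.natCast_dvd_natCast.mpr hpM2
            have hB : (M2 : ℤ) ∣ (((n₀ : ℕ) : ℤ) - 1) := by
              have h := (Nat.modEq_iff_dvd).mp hn₀2
              have h2 := dvd_neg.mpr h
              rw [neg_sub] at h2
              exact_mod_cast h2
            exact_mod_cast dvd_trans hA hB
          have dA : (((p.1 : ℕ)) ^ (k p) : ℤ) ∣ ((vx : ℤ) - ((n₀ : ℕ) : ℤ)) :=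
            dvd_trans (by exact_mod_cast Int.natCast_dvd_natCast.mpr (hpkm p)) hvxn
          push_cast at dA dM
          have e1 := castdvd p _ _ dA
          have e2 := castdvd p _ _ dM
          push_cast at e1 e2
          have efinal := dvd_add e1 e2
          have hrw : ((vx : ℤ_[(p.1 : ℕ)])) - 1
              = (((vx : ℤ_[(p.1 : ℕ)])) - ((n₀ : ℕ) : ℤ_[(p.1 : ℕ)]))
                + (((n₀ : ℕ) : ℤ_[(p.1 : ℕ)]) - 1) := by ring
          rw [hrw]
          exact efinal
    rw [hFeq]
    exact fun h => hu₀ (Circle.coe_eq_one.mp h)
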